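/- arXiv:1901.08484 — 4 statements merged into one kernel-verified Lean document; each statement's English description precedes it below -/
import Mathlib

section
/- Along any solution F(t) of the system F̈ᵢₖ + ∂U/∂Fᵢₖ + Σⱼ 𝓛ᵢⱼ Ḟⱼₖ − δω²𝒟Fᵢₖ = 0, the quantity Ẽ = ½Σᵢₖ(Ḟᵢₖ)² + U − ½ω²(F₁₁² + F₁₂² + k(F₂₁² + F₂₂²)) is constant in time. -/
open Matrix
attribute [local instance] Matrix.normedAddCommGroup Matrix.normedSpace

/-- Along any solution `F(t)` of `F̈ᵢₖ + ∂U/∂Fᵢₖ + Σⱼ 𝓛ᵢⱼḞⱼₖ − δω²𝒟Fᵢₖ = 0`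
(with `δ = 1`, `𝓛 = 2ωL`, `𝒟 = diag(1,k)`, `U = U₀(det F)^(1−γ)`, so that
`∂U/∂Fᵢₖ = U₀(1−γ)(det F)^(−γ)·cofᵢₖ(F)`), the energy
`Ẽ = ½Σᵢₖ(Ḟᵢₖ)² + U − ½ω²(F₁₁² + F₁₂² + k(F₂₁² + F₂₂²))` is constant in time. -/
theorem energy_first_integral (U₀ γ ω k : ℝ) (hU₀ : 0 < U₀) (hγ : 1 < γ)
    (F F' F'' : ℝ → Matrix (Fin 2) (Fin 2) ℝ)
    (hdet : ∀ t, 0 < (F t).det)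
    (hF : ∀ t, HasDerivAt F (F' t) t)
    (hF' : ∀ t, HasDerivAt F' (F'' t) t)
    (hode : ∀ t : ℝ,
      F'' t + (U₀ * (1 - γ) * (F t).det ^ (-γ)) •
          !![F t 1 1, -(F t 1 0); -(F t 0 1), F t 0 0] +
        (2 * ω) • (!![0, -1; 1, 0] * F' t) - ω ^ 2 • (!![1, 0; 0, k] * F t) = 0) :
    let Etil : ℝ → ℝ := fun t =>
      (1 / 2) * ((F' t 0 0) ^ 2 + (F' t 0 1) ^ 2 + (F' t 1 0) ^ 2 + (F' t 1 1) ^ 2) +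
        U₀ * (F t).det ^ (1 - γ) -
        (1 / 2) * ω ^ 2 *
          ((F t 0 0) ^ 2 + (F t 0 1) ^ 2 + k * ((F t 1 0) ^ 2 + (F t 1 1) ^ 2))
    ∀ t₁ t₂ : ℝ, Etil t₁ = Etil t₂ := by
  intro Etil
  have hent : ∀ (G G' : ℝ → Matrix (Fin 2) (Fin 2) ℝ), (∀ s, HasDerivAt G (G' s) s) →
      ∀ (i j : Fin 2) (t : ℝ), HasDerivAt (fun s => G s i j) (G' t i j) t := by
    intro G G' hG i j t
    exact ((Matrix.entryLinearMap ℝ ℝ i j :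
      Matrix (Fin 2) (Fin 2) ℝ →ₗ[ℝ] ℝ).toContinuousLinearMap).hasFDerivAt.comp_hasDerivAt
      t (hG t)
  have hFe := hent F F' hF
  have hF'e := hent F' F'' hF'
  have key : ∀ t, HasDerivAt Etil 0 t := by
    intro t
    have hc : True := trivial
    have hdetD : HasDerivAt (fun s => (F s).det)
        (F' t 0 0 * F t 1 1 + F t 0 0 * F' t 1 1 -
          (F' t 0 1 * F t 1 0 + F t 0 1 * F' t 1 0)) t := by
      have h : ∀ s : ℝ, (F s).det = F s 0 0 * F s 1 1 - F s 0 1 * F s 1 0 := fun s =>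
        Matrix.det_fin_two (F s)
      simp only [h]
      exact ((hFe 0 0 t).mul (hFe 1 1 t)).sub ((hFe 0 1 t).mul (hFe 1 0 t))
    have hU : HasDerivAt (fun s => U₀ * (F s).det ^ (1 - γ))
        ((U₀ * (1 - γ) * (F t).det ^ (-γ)) * (F' t 0 0 * F t 1 1 + F t 0 0 * F' t 1 1 -
          (F' t 0 1 * F t 1 0 + F t 0 1 * F' t 1 0))) t := by
      have h1 := (Real.hasDerivAt_rpow_const (p := 1 - γ) (Or.inl (hdet t).ne')).comp t hdetD
      have h2 := h1.const_mul U₀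
      refine HasDerivAt.congr_deriv h2 ?_
      have he : (1 : ℝ) - γ - 1 = -γ := by ring
      rw [he]
      ring
    have hK := ((((hF'e 0 0 t).pow 2).add ((hF'e 0 1 t).pow 2)).add
        ((hF'e 1 0 t).pow 2) |>.add ((hF'e 1 1 t).pow 2)).const_mul (1 / 2 : ℝ)
    have hP := ((((hFe 0 0 t).pow 2).add ((hFe 0 1 t).pow 2)).add
        ((((hFe 1 0 t).pow 2).add ((hFe 1 1 t).pow 2)).const_mul k)).const_mul
        (1 / 2 * ω ^ 2 : ℝ)
    have hD := (hK.add hU).sub hP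
    -- component equations of the ODE
    have hcomp : ∀ i j : Fin 2,
        ((F'' t + (U₀ * (1 - γ) * (F t).det ^ (-γ)) •
            !![F t 1 1, -(F t 1 0); -(F t 0 1), F t 0 0] +
          (2 * ω) • (!![0, -1; 1, 0] * F' t) - ω ^ 2 • (!![1, 0; 0, k] * F t) :
            Matrix (Fin 2) (Fin 2) ℝ) i j)
          = (0 : Matrix (Fin 2) (Fin 2) ℝ) i j := by
      intro i j; rw [hode t]
    have h00 := hcomp 0 0
    have h01 := hcomp 0 1
    have h10 := hcomp 1 0
    have h11 := hcomp 1 1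
    simp [Matrix.add_apply, Matrix.sub_apply, Matrix.smul_apply, Matrix.mul_apply,
      Matrix.vecMul, dotProduct, Fin.sum_univ_two] at h00 h01 h10 h11
    have hzero : (1 / 2 : ℝ) * ((2 : ℕ) * F' t 0 0 ^ (2 - 1) * F'' t 0 0 +
          (2 : ℕ) * F' t 0 1 ^ (2 - 1) * F'' t 0 1 +
          (2 : ℕ) * F' t 1 0 ^ (2 - 1) * F'' t 1 0 +
          (2 : ℕ) * F' t 1 1 ^ (2 - 1) * F'' t 1 1) +
        (U₀ * (1 - γ) * (F t).det ^ (-γ)) * (F' t 0 0 * F t 1 1 + F t 0 0 * F' t 1 1 -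
          (F' t 0 1 * F t 1 0 + F t 0 1 * F' t 1 0)) -
        (1 / 2 * ω ^ 2 : ℝ) * ((2 : ℕ) * F t 0 0 ^ (2 - 1) * F' t 0 0 +
          (2 : ℕ) * F t 0 1 ^ (2 - 1) * F' t 0 1 +
          k * ((2 : ℕ) * F t 1 0 ^ (2 - 1) * F' t 1 0 +
            (2 : ℕ) * F t 1 1 ^ (2 - 1) * F' t 1 1)) = 0 := by
      push_cast
      simp only [pow_one]
      linear_combination (F' t 0 0) * h00 + (F' t 0 1) * h01 + (F' t 1 0) * h10 +
        (F' t 1 1) * h11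
    rw [← hzero]
    exact hD
  intro t₁ t₂
  exact is_const_of_deriv_eq_zero (fun s => (key s).differentiableAt)
    (fun s => (key s).deriv) t₁ t₂
end

section
/- Along any solution of F̈ᵢₖ + ∂U/∂Fᵢₖ + 2ω(LḞ)ᵢₖ − ω²Fᵢₖ = 0 (case δ = 1, k = 1, l = 2ω), with J = F₁₁Ḟ₂₁ + F₁₂Ḟ₂₂ − F₂₁Ḟ₁₁ − F₂₂Ḟ₁₂ and G = Σᵢₖ Fᵢₖ², the quantity A = J + ωG is constant in time. -/
open Matrix
attribute [local instance] Matrix.normedAddCommGroup Matrix.normedSpace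

/-- Entry evaluation as a linear map. -/
def entryLM (i j : Fin 2) : Matrix (Fin 2) (Fin 2) ℝ →ₗ[ℝ] ℝ where
  toFun M := M i j
  map_add' _ _ := rfl
  map_smul' _ _ := rfl

/-- Along any solution of `F̈ᵢₖ + ∂U/∂Fᵢₖ + 2ω(LḞ)ᵢₖ − ω²Fᵢₖ = 0` (case `δ = 1`,
`k = 1`, `l = 2ω`, `U = U₀(det F)^(1−γ)`), with
`J = F₁₁Ḟ₂₁ + F₁₂Ḟ₂₂ − F₂₁Ḟ₁₁ − F₂₂Ḟ₁₂` and `G = Σᵢₖ Fᵢₖ²`, the quantity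
`A = J + ωG` is constant in time. -/
theorem first_integral_A (U₀ γ ω : ℝ) (hU₀ : 0 < U₀) (hγ : 1 < γ)
    (F F' F'' : ℝ → Matrix (Fin 2) (Fin 2) ℝ)
    (hdet : ∀ t, 0 < (F t).det)
    (hF : ∀ t, HasDerivAt F (F' t) t)
    (hF' : ∀ t, HasDerivAt F' (F'' t) t)
    (hode : ∀ t : ℝ,
      F'' t + (U₀ * (1 - γ) * (F t).det ^ (-γ)) •
          !![F t 1 1, -(F t 1 0); -(F t 0 1), F t 0 0] +
        (2 * ω) • (!![0, -1; 1, 0] * F' t) - ω ^ 2 • F t = 0) :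
    let J : ℝ → ℝ := fun t =>
      F t 0 0 * F' t 1 0 + F t 0 1 * F' t 1 1 - F t 1 0 * F' t 0 0 - F t 1 1 * F' t 0 1
    let G : ℝ → ℝ := fun t =>
      (F t 0 0) ^ 2 + (F t 0 1) ^ 2 + (F t 1 0) ^ 2 + (F t 1 1) ^ 2
    ∀ t₁ t₂ : ℝ, J t₁ + ω * G t₁ = J t₂ + ω * G t₂ := by
  intro J G t₁ t₂
  have hE : ∀ (i j : Fin 2) (t : ℝ), HasDerivAt (fun s => F s i j) (F' t i j) t := by
    intro i j t
    exact ((entryLM i j).toContinuousLinearMap.hasFDerivAt.comp_hasDerivAt t (hF t))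
  have hE' : ∀ (i j : Fin 2) (t : ℝ), HasDerivAt (fun s => F' s i j) (F'' t i j) t := by
    intro i j t
    exact ((entryLM i j).toContinuousLinearMap.hasFDerivAt.comp_hasDerivAt t (hF' t))
  set A : ℝ → ℝ := fun t => J t + ω * G t with hA
  have key : ∀ t, HasDerivAt A 0 t := by
    intro t
    have h00 := congrFun (congrFun (hode t) 0) 0
    have h01 := congrFun (congrFun (hode t) 0) 1
    have h10 := congrFun (congrFun (hode t) 1) 0
    have h11 := congrFun (congrFun (hode t) 1) 1
    simp [Matrix.add_apply, Matrix.sub_apply, Matrix.smul_apply, Matrix.mul_apply,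
      Matrix.vecMul, dotProduct, Fin.sum_univ_two] at h00 h01 h10 h11
    have hD : HasDerivAt A
        ((F t 0 0 * F'' t 1 0 + F' t 0 0 * F' t 1 0)
          + (F t 0 1 * F'' t 1 1 + F' t 0 1 * F' t 1 1)
          - (F t 1 0 * F'' t 0 0 + F' t 1 0 * F' t 0 0)
          - (F t 1 1 * F'' t 0 1 + F' t 1 1 * F' t 0 1)
          + ω * (2 * F t 0 0 * F' t 0 0 + 2 * F t 0 1 * F' t 0 1
            + 2 * F t 1 0 * F' t 1 0 + 2 * F t 1 1 * F' t 1 1)) t := by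
      have := ((((((hE 0 0 t).mul (hE' 1 0 t)).add ((hE 0 1 t).mul (hE' 1 1 t))).sub
          ((hE 1 0 t).mul (hE' 0 0 t))).sub ((hE 1 1 t).mul (hE' 0 1 t))).add
        ((HasDerivAt.const_mul ω
          (((((hE 0 0 t).pow 2).add ((hE 0 1 t).pow 2)).add ((hE 1 0 t).pow 2)).add
            ((hE 1 1 t).pow 2)))))
      refine this.congr_deriv ?_
      ring
    have hz : (F t 0 0 * F'' t 1 0 + F' t 0 0 * F' t 1 0)
          + (F t 0 1 * F'' t 1 1 + F' t 0 1 * F' t 1 1)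
          - (F t 1 0 * F'' t 0 0 + F' t 1 0 * F' t 0 0)
          - (F t 1 1 * F'' t 0 1 + F' t 1 1 * F' t 0 1)
          + ω * (2 * F t 0 0 * F' t 0 0 + 2 * F t 0 1 * F' t 0 1
            + 2 * F t 1 0 * F' t 1 0 + 2 * F t 1 1 * F' t 1 1) = 0 := by
      linear_combination F t 0 0 * h10 + F t 0 1 * h11 - F t 1 0 * h00 - F t 1 1 * h01
    rw [hz] at hD
    exact hD
  exact is_const_of_deriv_eq_zero (fun t => (key t).differentiableAt)
    (fun t => (key t).deriv) t₁ t₂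
end

section
/- Along any solution of F̈ᵢₖ + ∂U/∂Fᵢₖ + 2ω(LḞ)ᵢₖ − ω²Fᵢₖ = 0, with K = F₁₁Ḟ₁₂ + F₂₁Ḟ₂₂ − F₁₂Ḟ₁₁ − F₂₂Ḟ₂₁, the quantity B = K − 2ω det F is constant in time. -/
open Matrix
attribute [local instance] Matrix.normedAddCommGroup Matrix.normedSpace

/-- Along any solution of `F̈ᵢₖ + ∂U/∂Fᵢₖ + 2ω(LḞ)ᵢₖ − ω²Fᵢₖ = 0` (case `δ = 1`,
`k = 1`, `l = 2ω`, `U = U₀(det F)^(1−γ)`), with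
`K = F₁₁Ḟ₁₂ + F₂₁Ḟ₂₂ − F₁₂Ḟ₁₁ − F₂₂Ḟ₂₁`, the quantity `B = K − 2ω det F` is
constant in time. -/
theorem first_integral_B (U₀ γ ω : ℝ) (hU₀ : 0 < U₀) (hγ : 1 < γ)
    (F F' F'' : ℝ → Matrix (Fin 2) (Fin 2) ℝ)
    (hdet : ∀ t, 0 < (F t).det)
    (hF : ∀ t, HasDerivAt F (F' t) t)
    (hF' : ∀ t, HasDerivAt F' (F'' t) t)
    (hode : ∀ t : ℝ,
      F'' t + (U₀ * (1 - γ) * (F t).det ^ (-γ)) •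
          !![F t 1 1, -(F t 1 0); -(F t 0 1), F t 0 0] +
        (2 * ω) • (!![0, -1; 1, 0] * F' t) - ω ^ 2 • F t = 0) :
    let K : ℝ → ℝ := fun t =>
      F t 0 0 * F' t 0 1 + F t 1 0 * F' t 1 1 - F t 0 1 * F' t 0 0 - F t 1 1 * F' t 1 0
    ∀ t₁ t₂ : ℝ,
      K t₁ - 2 * ω * (F t₁).det = K t₂ - 2 * ω * (F t₂).det := by
  intro K t₁ t₂
  set B : ℝ → ℝ := fun t => K t - 2 * ω * (F t).det with hB
  have key : ∀ t, HasDerivAt B 0 t := by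
    intro t
    have hE : ∀ i j : Fin 2, HasDerivAt (fun s => F s i j) (F' t i j) t := fun i j => by
      have := ((Matrix.entryLinearMap ℝ ℝ i j).toContinuousLinearMap).hasFDerivAt.comp_hasDerivAt
        t (hF t)
      simp only [Function.comp_def] at this
      exact this
    have hE' : ∀ i j : Fin 2, HasDerivAt (fun s => F' s i j) (F'' t i j) t := fun i j => by
      have := ((Matrix.entryLinearMap ℝ ℝ i j).toContinuousLinearMap).hasFDerivAt.comp_hasDerivAt
        t (hF' t)
      simp only [Function.comp_def] at this
      exact this
    set c : ℝ := U₀ * (1 - γ) * (F t).det ^ (-γ) with hc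
    have h := hode t
    have e00 := congrFun (congrFun h 0) 0
    have e01 := congrFun (congrFun h 0) 1
    have e10 := congrFun (congrFun h 1) 0
    have e11 := congrFun (congrFun h 1) 1
    simp [Matrix.add_apply, Matrix.sub_apply, Matrix.smul_apply, smul_eq_mul,
      Matrix.mul_apply, Matrix.vecMul, dotProduct, Fin.sum_univ_two, Matrix.vecHead, Matrix.vecTail] at e00 e01 e10 e11
    have hBd : HasDerivAt B
        ((F' t 0 0 * F' t 0 1 + F t 0 0 * F'' t 0 1
          + (F' t 1 0 * F' t 1 1 + F t 1 0 * F'' t 1 1)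
          - (F' t 0 1 * F' t 0 0 + F t 0 1 * F'' t 0 0)
          - (F' t 1 1 * F' t 1 0 + F t 1 1 * F'' t 1 0))
          - 2 * ω * (F' t 0 0 * F t 1 1 + F t 0 0 * F' t 1 1
            - (F' t 0 1 * F t 1 0 + F t 0 1 * F' t 1 0))) t := by
      have : B = fun s => F s 0 0 * F' s 0 1 + F s 1 0 * F' s 1 1
          - F s 0 1 * F' s 0 0 - F s 1 1 * F' s 1 0
          - 2 * ω * (F s 0 0 * F s 1 1 - F s 0 1 * F s 1 0) := by
        funext s
        simp [hB, K, Matrix.det_fin_two]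
      rw [this]
      exact ((((((hE 0 0).mul (hE' 0 1)).add ((hE 1 0).mul (hE' 1 1))).sub
        ((hE 0 1).mul (hE' 0 0))).sub ((hE 1 1).mul (hE' 1 0))).sub
        ((HasDerivAt.const_mul (2 * ω)
          (((hE 0 0).mul (hE 1 1)).sub ((hE 0 1).mul (hE 1 0))))))
    convert hBd using 1
    linear_combination (-(F t 0 0)) * e01 - F t 1 0 * e11 + F t 0 1 * e00 + F t 1 1 * e10
  have hd : Differentiable ℝ B := fun t => (key t).differentiableAt
  have := is_const_of_deriv_eq_zero hd (fun t => (key t).deriv) t₁ t₂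
  simpa [hB] using this
end

section
/- For γ = 2 (so U = U₀/det F is homogeneous of degree −2 in the entries of F), any solution of F̈ᵢₖ + ∂U/∂Fᵢₖ + 2ω(LḞ)ᵢₖ − ω²Fᵢₖ = 0 satisfies G̈/2 = 2(Ẽ + ωA), where G = Σᵢₖ Fᵢₖ², Ẽ = ½Σ(Ḟᵢₖ)² + U − ½ω²G, and A = J + ωG; hence G(t) = 2(Ẽ + ωA)t² + k₁t + k₀ for some constants k₀, k₁. -/
open Matrix
attribute [local instance] Matrix.normedAddCommGroup Matrix.normedSpace


lemma entry_hasDerivAt {F : ℝ → Matrix (Fin 2) (Fin 2) ℝ} {F' : Matrix (Fin 2) (Fin 2) ℝ} {t : ℝ}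
    (h : HasDerivAt F F' t) (i j : Fin 2) :
    HasDerivAt (fun s => F s i j) (F' i j) t := by
  have hL := (LinearMap.toContinuousLinearMap
    (Matrix.entryLinearMap ℝ ℝ i j)).hasFDerivAt.comp_hasDerivAt t h
  exact hL

/-- For `γ = 2` (so `U = U₀/det F` is homogeneous of degree `−2` in the entries of `F`,
with `∂U/∂Fᵢₖ = −(U₀/(det F)²)·cofᵢₖ(F)`), any solution of
`F̈ᵢₖ + ∂U/∂Fᵢₖ + 2ω(LḞ)ᵢₖ − ω²Fᵢₖ = 0` satisfies `G̈/2 = 2(Ẽ + ωA)`, where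
`G = Σᵢₖ Fᵢₖ²`, `Ẽ = ½Σ(Ḟᵢₖ)² + U − ½ω²G`, `J = F₁₁Ḟ₂₁ + F₁₂Ḟ₂₂ − F₂₁Ḟ₁₁ − F₂₂Ḟ₁₂`
and `A = J + ωG`; hence `G(t) = 2(Ẽ + ωA)t² + k₁t + k₀` for some constants `k₀, k₁`. -/
theorem G_quadratic_in_time (U₀ ω : ℝ) (hU₀ : 0 < U₀)
    (F F' F'' : ℝ → Matrix (Fin 2) (Fin 2) ℝ)
    (hdet : ∀ t, 0 < (F t).det)
    (hF : ∀ t, HasDerivAt F (F' t) t)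
    (hF' : ∀ t, HasDerivAt F' (F'' t) t)
    (hode : ∀ t : ℝ,
      F'' t + (-(U₀ / (F t).det ^ 2)) •
          !![F t 1 1, -(F t 1 0); -(F t 0 1), F t 0 0] +
        (2 * ω) • (!![0, -1; 1, 0] * F' t) - ω ^ 2 • F t = 0) :
    let G : ℝ → ℝ := fun t =>
      (F t 0 0) ^ 2 + (F t 0 1) ^ 2 + (F t 1 0) ^ 2 + (F t 1 1) ^ 2
    let J : ℝ → ℝ := fun t =>
      F t 0 0 * F' t 1 0 + F t 0 1 * F' t 1 1 - F t 1 0 * F' t 0 0 - F t 1 1 * F' t 0 1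
    let Etil : ℝ → ℝ := fun t =>
      (1 / 2) * ((F' t 0 0) ^ 2 + (F' t 0 1) ^ 2 + (F' t 1 0) ^ 2 + (F' t 1 1) ^ 2) +
        U₀ / (F t).det - (1 / 2) * ω ^ 2 * G t
    let A : ℝ → ℝ := fun t => J t + ω * G t
    (∀ t : ℝ, deriv (deriv G) t / 2 = 2 * (Etil t + ω * A t)) ∧
    ∃ k₀ k₁ : ℝ, ∀ t : ℝ,
      G t = 2 * (Etil 0 + ω * A 0) * t ^ 2 + k₁ * t + k₀ := by

  intro G J Etil A
  have hode' : ∀ t : ℝ,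
      (F'' t 0 0 + -(U₀ / (F t).det ^ 2 * F t 1 1) + -(2 * ω * F' t 1 0) - ω ^ 2 * F t 0 0 = 0) ∧
      (F'' t 0 1 + U₀ / (F t).det ^ 2 * F t 1 0 + -(2 * ω * F' t 1 1) - ω ^ 2 * F t 0 1 = 0) ∧
      (F'' t 1 0 + U₀ / (F t).det ^ 2 * F t 0 1 + 2 * ω * F' t 0 0 - ω ^ 2 * F t 1 0 = 0) ∧
      (F'' t 1 1 + -(U₀ / (F t).det ^ 2 * F t 0 0) + 2 * ω * F' t 0 1 - ω ^ 2 * F t 1 1 = 0) := by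
    intro t
    have h00 := congrFun (congrFun (hode t) 0) 0
    have h01 := congrFun (congrFun (hode t) 0) 1
    have h10 := congrFun (congrFun (hode t) 1) 0
    have h11 := congrFun (congrFun (hode t) 1) 1
    simp only [Matrix.add_apply, Matrix.sub_apply, Matrix.smul_apply, Matrix.mul_apply,
      Fin.sum_univ_two, smul_eq_mul, Matrix.vecMul, dotProduct, Matrix.zero_apply,
      Matrix.cons_val', Matrix.cons_val_zero, Matrix.cons_val_one, Matrix.head_cons,
      Matrix.empty_val', Matrix.cons_val_fin_one, Matrix.head_fin_const,
      Matrix.of_apply] at h00 h01 h10 h11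
    exact ⟨by linarith, by linarith, by linarith, by linarith⟩
  have hkey : ∀ t : ℝ, U₀ / (F t).det ^ 2 *
      (F t 0 0 * F t 1 1 - F t 0 1 * F t 1 0) = U₀ / (F t).det := by
    intro t
    rw [← Matrix.det_fin_two]
    have h := (hdet t).ne'
    field_simp
  have ea : ∀ t, HasDerivAt (fun s => F s 0 0) (F' t 0 0) t := fun t => entry_hasDerivAt (hF t) 0 0
  have eb : ∀ t, HasDerivAt (fun s => F s 0 1) (F' t 0 1) t := fun t => entry_hasDerivAt (hF t) 0 1
  have ec : ∀ t, HasDerivAt (fun s => F s 1 0) (F' t 1 0) t := fun t => entry_hasDerivAt (hF t) 1 0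
  have ed : ∀ t, HasDerivAt (fun s => F s 1 1) (F' t 1 1) t := fun t => entry_hasDerivAt (hF t) 1 1
  have ea' : ∀ t, HasDerivAt (fun s => F' s 0 0) (F'' t 0 0) t := fun t => entry_hasDerivAt (hF' t) 0 0
  have eb' : ∀ t, HasDerivAt (fun s => F' s 0 1) (F'' t 0 1) t := fun t => entry_hasDerivAt (hF' t) 0 1
  have ec' : ∀ t, HasDerivAt (fun s => F' s 1 0) (F'' t 1 0) t := fun t => entry_hasDerivAt (hF' t) 1 0
  have ed' : ∀ t, HasDerivAt (fun s => F' s 1 1) (F'' t 1 1) t := fun t => entry_hasDerivAt (hF' t) 1 1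
  have hDet : ∀ t, HasDerivAt (fun s => (F s).det)
      (F' t 0 0 * F t 1 1 + F t 0 0 * F' t 1 1 -
        (F' t 0 1 * F t 1 0 + F t 0 1 * F' t 1 0)) t := by
    intro t
    have h := ((ea t).mul (ed t)).sub ((eb t).mul (ec t))
    simp only [Matrix.det_fin_two]
    exact h
  -- the conserved quantity E = Etil + ω A
  have hE0 : ∀ t, HasDerivAt (fun s =>
      (1 / 2) * ((F' s 0 0) ^ 2 + (F' s 0 1) ^ 2 + (F' s 1 0) ^ 2 + (F' s 1 1) ^ 2) +
        U₀ / (F s).det + (1 / 2) * ω ^ 2 *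
          ((F s 0 0) ^ 2 + (F s 0 1) ^ 2 + (F s 1 0) ^ 2 + (F s 1 1) ^ 2) +
        ω * (F s 0 0 * F' s 1 0 + F s 0 1 * F' s 1 1 -
          F s 1 0 * F' s 0 0 - F s 1 1 * F' s 0 1)) 0 t := by
    intro t
    obtain ⟨h00, h01, h10, h11⟩ := hode' t
    have h := ((((((((ea' t).pow 2).add ((eb' t).pow 2)).add ((ec' t).pow 2)).add
        ((ed' t).pow 2)).const_mul (1/2 : ℝ)).add
        ((hasDerivAt_const t U₀).div (hDet t) (hdet t).ne')).add
        (((((((ea t).pow 2).add ((eb t).pow 2)).add ((ec t).pow 2)).add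
          ((ed t).pow 2)).const_mul ((1/2) * ω^2 : ℝ)))).add
        ((((((ea t).mul (ec' t)).sub ((ec t).mul (ea' t)))).add
          ((((eb t).mul (ed' t)).sub ((ed t).mul (eb' t))))).const_mul ω)
    convert (show HasDerivAt (_ : ℝ → ℝ) _ t from h) using 1
    · funext s
      simp only [Pi.add_apply, Pi.sub_apply, Pi.mul_apply, Pi.pow_apply, Pi.div_apply, Pi.neg_apply]
      ring
    · push_cast
      linear_combination (-(F' t 0 0 - ω * F t 1 0)) * h00 +
        (-(F' t 0 1 - ω * F t 1 1)) * h01 +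
        (-(F' t 1 0 + ω * F t 0 0)) * h10 +
        (-(F' t 1 1 + ω * F t 0 1)) * h11
  -- E is constant
  have hEc : ∀ t : ℝ,
      (1 / 2) * ((F' t 0 0) ^ 2 + (F' t 0 1) ^ 2 + (F' t 1 0) ^ 2 + (F' t 1 1) ^ 2) +
        U₀ / (F t).det + (1 / 2) * ω ^ 2 *
          ((F t 0 0) ^ 2 + (F t 0 1) ^ 2 + (F t 1 0) ^ 2 + (F t 1 1) ^ 2) +
        ω * (F t 0 0 * F' t 1 0 + F t 0 1 * F' t 1 1 -
          F t 1 0 * F' t 0 0 - F t 1 1 * F' t 0 1) = Etil 0 + ω * A 0 := by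
    intro t
    have hconst := is_const_of_deriv_eq_zero
      (f := fun s =>
        (1 / 2) * ((F' s 0 0) ^ 2 + (F' s 0 1) ^ 2 + (F' s 1 0) ^ 2 + (F' s 1 1) ^ 2) +
          U₀ / (F s).det + (1 / 2) * ω ^ 2 *
            ((F s 0 0) ^ 2 + (F s 0 1) ^ 2 + (F s 1 0) ^ 2 + (F s 1 1) ^ 2) +
          ω * (F s 0 0 * F' s 1 0 + F s 0 1 * F' s 1 1 -
            F s 1 0 * F' s 0 0 - F s 1 1 * F' s 0 1))
      (fun s => (hE0 s).differentiableAt) (fun s => (hE0 s).deriv) t 0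
    rw [hconst]
    simp only [Etil, A, J, G]
    ring
  -- G' and its value
  have hG1 : ∀ t, HasDerivAt G (2 * (F t 0 0 * F' t 0 0 + F t 0 1 * F' t 0 1 +
      F t 1 0 * F' t 1 0 + F t 1 1 * F' t 1 1)) t := by
    intro t
    have h := (((((ea t).pow 2).add ((eb t).pow 2)).add ((ec t).pow 2)).add ((ed t).pow 2))
    convert (show HasDerivAt (_ : ℝ → ℝ) _ _ from h) using 1
    · rfl
    push_cast
    ring
  -- G'' = 4 (Etil + ω A) = 4 (Etil 0 + ω A 0)
  have hG2 : ∀ t, HasDerivAt (fun s => 2 * (F s 0 0 * F' s 0 0 + F s 0 1 * F' s 0 1 +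
      F s 1 0 * F' s 1 0 + F s 1 1 * F' s 1 1)) (4 * (Etil 0 + ω * A 0)) t := by
    intro t
    obtain ⟨h00, h01, h10, h11⟩ := hode' t
    have h := (((((ea t).mul (ea' t)).add ((eb t).mul (eb' t))).add
      ((ec t).mul (ec' t))).add ((ed t).mul (ed' t))).const_mul (2 : ℝ)
    convert (show HasDerivAt (_ : ℝ → ℝ) _ _ from h) using 1
    · rfl
    rw [show (4 : ℝ) * (Etil 0 + ω * A 0) = 4 * (Etil 0 + ω * A 0) from rfl]
    rw [← hEc t]
    linear_combination (-(2 * F t 0 0)) * h00 + (-(2 * F t 0 1)) * h01 +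
      (-(2 * F t 1 0)) * h10 + (-(2 * F t 1 1)) * h11 + (-4) * hkey t
  have hdG : deriv G = fun t => 2 * (F t 0 0 * F' t 0 0 + F t 0 1 * F' t 0 1 +
      F t 1 0 * F' t 1 0 + F t 1 1 * F' t 1 1) := funext fun t => (hG1 t).deriv
  constructor
  · intro t
    have h2 : Etil t + ω * A t = Etil 0 + ω * A 0 := by
      rw [← hEc t]; simp only [Etil, A, J, G]; ring
    rw [hdG, (hG2 t).deriv, h2]
    ring
  · refine ⟨G 0, 2 * (F 0 0 0 * F' 0 0 0 + F 0 0 1 * F' 0 0 1 +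
      F 0 1 0 * F' 0 1 0 + F 0 1 1 * F' 0 1 1), fun t => ?_⟩
    set c : ℝ := 2 * (Etil 0 + ω * A 0) with hc
    set k₁ : ℝ := 2 * (F 0 0 0 * F' 0 0 0 + F 0 0 1 * F' 0 0 1 +
      F 0 1 0 * F' 0 1 0 + F 0 1 1 * F' 0 1 1) with hk₁
    -- first: G' t = 2 c t + k₁
    have hlin : ∀ s : ℝ, 2 * (F s 0 0 * F' s 0 0 + F s 0 1 * F' s 0 1 +
        F s 1 0 * F' s 1 0 + F s 1 1 * F' s 1 1) - (2 * c * s + k₁) = 0 := by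
      intro s
      have hD : ∀ u : ℝ, HasDerivAt (fun r => 2 * (F r 0 0 * F' r 0 0 + F r 0 1 * F' r 0 1 +
          F r 1 0 * F' r 1 0 + F r 1 1 * F' r 1 1) - (2 * c * r + k₁)) 0 u := by
        intro u
        have h := (hG2 u).sub (((hasDerivAt_id u).const_mul (2 * c)).add_const k₁)
        convert (show HasDerivAt (_ : ℝ → ℝ) _ _ from h) using 1
        · rfl
        rw [hc]; ring
      have hconst := is_const_of_deriv_eq_zero
        (fun u => (hD u).differentiableAt) (fun u => (hD u).deriv) s 0
      rw [hconst]
      simp [hk₁]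
    -- then: G t = c t² + k₁ t + G 0
    have hD2 : ∀ u : ℝ, HasDerivAt (fun r => G r - (c * r ^ 2 + k₁ * r + G 0)) 0 u := by
      intro u
      have h := (hG1 u).sub ((((hasDerivAt_pow 2 u).const_mul c).add
        ((hasDerivAt_id u).const_mul k₁)).add_const (G 0))
      have key := hlin u
      convert (show HasDerivAt (_ : ℝ → ℝ) _ _ from h) using 1
      · rfl
      push_cast
      linarith [hlin u]
    have hconst := is_const_of_deriv_eq_zero
      (fun u => (hD2 u).differentiableAt) (fun u => (hD2 u).deriv) t 0
    have : G t - (c * t ^ 2 + k₁ * t + G 0) = 0 := by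
      rw [hconst]; ring
    rw [hc] at this
    linarith
end
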